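/- Let δ be a real number with 0 < δ ≤ (9 − √73)/4 and let q₁, q₂ ∈ [0, 1]. Define D = (1 − q₁)/2 + (1 − q₂)/2 − ((1 + δ)/(6 − 2δ))·(q₁ + q₂). Then: (1) if q₁ ≤ δ or q₂ ≤ δ, then D ≥ 2δ; and (2) if q₁ ≥ 1 − δ and q₂ ≥ 1 − δ, then −D ≥ 2δ. -/
import Mathlib


/-- Correctness of the AND-gate gadget in the polymatrix-game reduction for
ε-Nash equilibria: with `D` the output player's utility gap in favour of
'zero', if some input probability is at most `δ` then `D ≥ 2δ`, and if both
are at least `1 − δ` then `−D ≥ 2δ`. -/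
theorem polymatrix_ne_and_gadget (δ q1 q2 : ℝ)
    (hδ0 : 0 < δ) (hδ1 : δ ≤ (9 - Real.sqrt 73) / 4)
    (hq1 : q1 ∈ Set.Icc (0:ℝ) 1) (hq2 : q2 ∈ Set.Icc (0:ℝ) 1) :
    ((q1 ≤ δ ∨ q2 ≤ δ) →
      2 * δ ≤ (1 - q1) / 2 + (1 - q2) / 2 - ((1 + δ) / (6 - 2 * δ)) * (q1 + q2)) ∧
    ((1 - δ ≤ q1 ∧ 1 - δ ≤ q2) →
      2 * δ ≤ -((1 - q1) / 2 + (1 - q2) / 2 - ((1 + δ) / (6 - 2 * δ)) * (q1 + q2))) := by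
  obtain ⟨h10, h11⟩ := hq1
  obtain ⟨h20, h21⟩ := hq2
  have h8 : (8:ℝ) ≤ Real.sqrt 73 := by
    nlinarith [Real.sq_sqrt (by norm_num : (73:ℝ) ≥ 0), Real.sqrt_nonneg 73]
  have hs : Real.sqrt 73 ≤ 9 - 4 * δ := by linarith
  have key : 2 * δ ^ 2 - 9 * δ + 1 ≥ 0 := by
    nlinarith [Real.sq_sqrt (by norm_num : (73:ℝ) ≥ 0)]
  have hδ14 : δ ≤ 1 / 4 := by linarith
  have h6 : (0:ℝ) < 6 - 2 * δ := by linarith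
  have hc : (1 + δ) / (6 - 2 * δ) * (6 - 2 * δ) = 1 + δ := div_mul_cancel₀ _ (ne_of_gt h6)
  constructor
  · rintro (h | h) <;> nlinarith [mul_nonneg (div_nonneg (by linarith : (0:ℝ) ≤ 1 + δ) h6.le) h20,
      mul_nonneg (div_nonneg (by linarith : (0:ℝ) ≤ 1 + δ) h6.le) h10]
  · rintro ⟨ha, hb⟩
    nlinarith [mul_nonneg (div_nonneg (by linarith : (0:ℝ) ≤ 1 + δ) h6.le) (by linarith : (0:ℝ) ≤ q1 - (1 - δ)),
      mul_nonneg (div_nonneg (by linarith : (0:ℝ) ≤ 1 + δ) h6.le) (by linarith : (0:ℝ) ≤ q2 - (1 - δ))]
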